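/- Let S be an n×n real positive semidefinite matrix written in block form S = [[A, B], [Bᵀ, C]] with A an m×m block, and let Ŝ = [[A],[Bᵀ]] A† [A, B] be its Nyström approximation. Then rank(Ŝ) = rank(A); in particular rank(Ŝ) ≤ m, so the Nyström approximation has rank at most the size of the sampled block. -/

import Mathlib

open Matrix

/-- `Ad` is the Moore–Penrose inverse of `A`: the Penrose equations
`A Ad A = A`, `Ad A Ad = Ad`, `(A Ad)ᵀ = A Ad`, `(Ad A)ᵀ = Ad A`. -/
def IsMoorePenroseInv {m n : ℕ} (A : Matrix (Fin m) (Fin n) ℝ)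
    (Ad : Matrix (Fin n) (Fin m) ℝ) : Prop :=
  A * Ad * A = A ∧ Ad * A * Ad = Ad ∧ (A * Ad)ᵀ = A * Ad ∧ (Ad * A)ᵀ = Ad * A

/-- The Nyström approximation `Ŝ = [[A],[Bᵀ]] A† [A, B]` of a positive
semidefinite `S = [[A, B], [Bᵀ, C]]` satisfies `rank Ŝ = rank A`; in particular
`rank Ŝ ≤ m`. -/
theorem nystrom_approximation_rank {m p : ℕ}
    (A Ad : Matrix (Fin m) (Fin m) ℝ)
    (B : Matrix (Fin m) (Fin p) ℝ) (C : Matrix (Fin p) (Fin p) ℝ)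
    (hS : (Matrix.fromBlocks A B Bᵀ C).PosSemidef)
    (hMP : IsMoorePenroseInv A Ad) :
    (Matrix.fromBlocks (A * Ad * A) (A * Ad * B) (Bᵀ * Ad * A) (Bᵀ * Ad * B)).rank = A.rank ∧
    (Matrix.fromBlocks (A * Ad * A) (A * Ad * B) (Bᵀ * Ad * A) (Bᵀ * Ad * B)).rank ≤ m := by
  obtain ⟨h1, h2, h3, h4⟩ := hMP
  set Sh := Matrix.fromBlocks (A * Ad * A) (A * Ad * B) (Bᵀ * Ad * A) (Bᵀ * Ad * B) with hSh
  have hfact : Sh = fromRows A Bᵀ * (Ad * fromCols A B) := by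
    rw [mul_fromCols, fromRows_mul_fromCols]
    simp [hSh, Matrix.mul_assoc]
  -- rank Sh ≤ rank A
  have hAd_le : Ad.rank ≤ A.rank := by
    calc Ad.rank = (Ad * A * Ad).rank := by rw [h2]
    _ ≤ (Ad * A).rank := rank_mul_le_left _ _
    _ ≤ A.rank := rank_mul_le_right _ _
  have hle : Sh.rank ≤ A.rank := by
    calc Sh.rank ≤ (Ad * fromCols A B).rank := hfact ▸ rank_mul_le_right _ _
    _ ≤ Ad.rank := rank_mul_le_left _ _
    _ ≤ A.rank := hAd_le
  -- rank A ≤ rank Sh : A is recovered as a product involving Sh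
  have hA : Matrix.fromCols (1 : Matrix (Fin m) (Fin m) ℝ) (0 : Matrix (Fin m) (Fin p) ℝ) * Sh *
      fromRows (1 : Matrix (Fin m) (Fin m) ℝ) (0 : Matrix (Fin p) (Fin m) ℝ) = A := by
    rw [hSh, fromCols_mul_fromBlocks]
    rw [fromCols_mul_fromRows]
    simp [h1]
  have hge : A.rank ≤ Sh.rank := by
    calc A.rank = (Matrix.fromCols (1 : Matrix (Fin m) (Fin m) ℝ) (0 : Matrix (Fin m) (Fin p) ℝ) * Sh *
        fromRows (1 : Matrix (Fin m) (Fin m) ℝ) (0 : Matrix (Fin p) (Fin m) ℝ)).rank := by rw [hA]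
    _ ≤ (Matrix.fromCols (1 : Matrix (Fin m) (Fin m) ℝ) (0 : Matrix (Fin m) (Fin p) ℝ) * Sh).rank := rank_mul_le_left _ _
    _ ≤ Sh.rank := rank_mul_le_right _ _
  have heq : Sh.rank = A.rank := le_antisymm hle hge
  exact ⟨heq, heq ▸ (hle.trans A.rank_le_card_width).trans (Fintype.card_fin m).le⟩
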